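/- arXiv:math/0005199 — 5 statements merged into one kernel-verified Lean document; each statement's English description precedes it below -/
import Mathlib

section
/- Let $K$ be an $(n-1)$-dimensional simplicial complex on $m$ vertices with face numbers $f_{-1}=1, f_0, \ldots, f_{n-1}$ (and $f_j=0$ for $j\ge n$), and define $\chi_p = \sum_{j=0}^{m} (-1)^{p-j} f_{j-1} \binom{m-j}{p-j}$ for $0 \le p \le m$. Then $\sum_{p=0}^m \chi_p t^{2p} = (1-t^2)^{m-n}\,(h_0 + h_1 t^2 + \cdots + h_n t^{2n})$ as polynomials, where $(h_0,\ldots,h_n)$ is the h-vector of $K$. -/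
open Finset Polynomial

lemma my_reflect_sum {α : Type*} (s : Finset α) (g : α → ℤ[X]) (N : ℕ) :
    Polynomial.reflect N (∑ a ∈ s, g a) = ∑ a ∈ s, Polynomial.reflect N (g a) := by
  classical
  induction s using Finset.cons_induction with
  | empty => simp [Polynomial.reflect_zero]
  | cons a s ha ih => simp [Finset.sum_insert ha, Polynomial.reflect_add, ih]

lemma my_natDegree_X_sub_one : (X - 1 : ℤ[X]).natDegree = 1 := by
  simpa using Polynomial.natDegree_X_sub_C (1 : ℤ)

lemma my_reflect_sub_one_pow (k : ℕ) :
    Polynomial.reflect k ((X - 1 : ℤ[X]) ^ k) = (1 - X) ^ k := by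
  induction k with
  | zero => simp [Polynomial.reflect_one]
  | succ k ih =>
    have h1 : ((X - 1 : ℤ[X]) ^ (k + 1)) = (X - 1) * (X - 1) ^ k := by ring
    rw [h1, show k + 1 = 1 + k from by omega,
      Polynomial.reflect_mul (X - 1) ((X - 1) ^ k) ?_ ?_]
    · rw [ih, Polynomial.reflect_sub, Polynomial.reflect_one_X,
        show (1 : ℤ[X]) = C 1 from by simp, Polynomial.reflect_C]
      simp only [map_one]
      ring
    · rw [my_natDegree_X_sub_one]
    · refine le_trans Polynomial.natDegree_pow_le ?_
      rw [my_natDegree_X_sub_one]; omega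

lemma my_binom (M : ℕ) :
    ((1 : ℤ[X]) - X ^ 2) ^ M
      = ∑ q ∈ Finset.range (M + 1), C ((-1 : ℤ) ^ q * (M.choose q : ℤ)) * X ^ (2 * q) := by
  rw [sub_pow, ← Finset.sum_range_reflect]
  apply Finset.sum_congr rfl
  intro q hq
  rw [Finset.mem_range] at hq
  have hq' : q ≤ M := by omega
  rw [show M + 1 - 1 - q = M - q from by omega, show M - (M - q) = q from by omega,
    Nat.choose_symm hq']
  have hsign : ((-1 : ℤ[X]) ^ (M - q + M)) = (-1) ^ q := by
    rw [show M - q + M = q + 2 * (M - q) from by omega, pow_add, pow_mul]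
    simp
  rw [hsign]
  simp only [map_mul, map_pow, map_natCast, map_neg, map_one, one_pow, pow_mul]
  ring

/-- Generating polynomial of the Euler characteristics of the bigraded components of the
cellular chain complex of the moment-angle complex `Z_K`:
`∑_p χ_p t^{2p} = (1-t²)^{m-n} (h_0 + h_1 t² + ⋯ + h_n t^{2n})`.
Here `f j` denotes `f_{j-1}` (so `f 0 = 1`, and `f j = 0` for `j > n`), and
`χ_p = ∑_{j=0}^{p} (-1)^{p-j} f_{j-1} binom(m-j, p-j)`. -/
theorem stmt_4 (m n : ℕ) (hmn : n ≤ m) (f h : ℕ → ℤ) (hf : f 0 = 1)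
    (hfz : ∀ j, n < j → f j = 0)
    (hh : ∑ k ∈ Finset.range (n + 1), C (h k) * X ^ (n - k)
        = ∑ i ∈ Finset.range (n + 1), C (f i) * (X - 1) ^ (n - i)) :
    ∑ p ∈ Finset.range (m + 1),
        C (∑ j ∈ Finset.range (p + 1),
            (-1 : ℤ) ^ (p - j) * f j * ((m - j).choose (p - j))) * X ^ (2 * p)
      = (1 - X ^ 2) ^ (m - n) * ∑ i ∈ Finset.range (n + 1), C (h i) * X ^ (2 * i) := by
  -- Step 1: reflect the h-vector identity
  have key : ∑ k ∈ Finset.range (n + 1), C (h k) * X ^ k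
      = ∑ i ∈ Finset.range (n + 1), C (f i) * (X ^ i * (1 - X) ^ (n - i)) := by
    have hrefl := congrArg (Polynomial.reflect n) hh
    rw [my_reflect_sum, my_reflect_sum] at hrefl
    calc ∑ k ∈ Finset.range (n + 1), C (h k) * X ^ k
        = ∑ k ∈ Finset.range (n + 1), Polynomial.reflect n (C (h k) * X ^ (n - k)) := by
          apply Finset.sum_congr rfl
          intro k hk
          rw [Finset.mem_range] at hk
          rw [Polynomial.reflect_C_mul_X_pow, Polynomial.revAt_le (by omega)]
          congr 2
          omega
      _ = ∑ i ∈ Finset.range (n + 1), Polynomial.reflect n (C (f i) * (X - 1) ^ (n - i)) :=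
          hrefl
      _ = ∑ i ∈ Finset.range (n + 1), C (f i) * (X ^ i * (1 - X) ^ (n - i)) := by
          apply Finset.sum_congr rfl
          intro i hi
          rw [Finset.mem_range] at hi
          rw [show n = i + (n - i) from by omega,
            Polynomial.reflect_mul (C (f i)) ((X - 1) ^ (i + (n - i) - i)) (by simp) ?_]
          · rw [Polynomial.reflect_C, show i + (n - i) - i = n - i from by omega,
              my_reflect_sub_one_pow]
            ring
          · refine le_trans Polynomial.natDegree_pow_le ?_
            rw [my_natDegree_X_sub_one]; omega
  -- Step 2: substitute X ↦ X²
  have key2 : ∑ k ∈ Finset.range (n + 1), C (h k) * X ^ (2 * k)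
      = ∑ i ∈ Finset.range (n + 1), C (f i) * (X ^ (2 * i) * (1 - X ^ 2) ^ (n - i)) := by
    have hcomp := congrArg (fun p : ℤ[X] => p.comp (X ^ 2)) key
    simp only [Polynomial.eval₂_finset_sum, Polynomial.comp, Polynomial.eval₂_mul,
      Polynomial.eval₂_C, Polynomial.eval₂_X_pow, Polynomial.eval₂_X, Polynomial.eval₂_sub,
      Polynomial.eval₂_one, Polynomial.eval₂_pow] at hcomp
    simpa only [← pow_mul] using hcomp
  -- Step 3: expand the LHS and swap the double sum
  rw [key2, Finset.mul_sum]
  have inner : ∀ j ∈ Finset.range (m + 1),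
      (∑ p ∈ Finset.Ico j (m + 1),
          C ((-1 : ℤ) ^ (p - j) * f j * ((m - j).choose (p - j))) * X ^ (2 * p))
        = C (f j) * (X ^ (2 * j) * (1 - X ^ 2) ^ (m - j)) := by
    intro j hj
    rw [Finset.mem_range] at hj
    rw [Finset.sum_Ico_eq_sum_range, show m + 1 - j = (m - j) + 1 from by omega,
      my_binom, Finset.mul_sum, Finset.mul_sum]
    apply Finset.sum_congr rfl
    intro q hq
    rw [show j + q - j = q from by omega, show 2 * (j + q) = 2 * j + 2 * q from by ring,
      pow_add]
    simp only [map_mul]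
    ring
  calc ∑ p ∈ Finset.range (m + 1),
        C (∑ j ∈ Finset.range (p + 1),
            (-1 : ℤ) ^ (p - j) * f j * ((m - j).choose (p - j))) * X ^ (2 * p)
      = ∑ p ∈ Finset.range (m + 1), ∑ j ∈ Finset.range (p + 1),
          C ((-1 : ℤ) ^ (p - j) * f j * ((m - j).choose (p - j))) * X ^ (2 * p) := by
        simp only [map_sum, Finset.sum_mul]
    _ = ∑ j ∈ Finset.range (m + 1), ∑ p ∈ Finset.Ico j (m + 1),
          C ((-1 : ℤ) ^ (p - j) * f j * ((m - j).choose (p - j))) * X ^ (2 * p) := by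
        have hswap := Finset.sum_Ico_Ico_comm 0 (m + 1)
          (fun j p => C ((-1 : ℤ) ^ (p - j) * f j * ((m - j).choose (p - j))) * X ^ (2 * p))
        simp only [Nat.Ico_zero_eq_range] at hswap
        exact hswap.symm
    _ = ∑ j ∈ Finset.range (m + 1), C (f j) * (X ^ (2 * j) * (1 - X ^ 2) ^ (m - j)) :=
        Finset.sum_congr rfl inner
    _ = ∑ j ∈ Finset.range (n + 1), C (f j) * (X ^ (2 * j) * (1 - X ^ 2) ^ (m - j)) := by
        refine (Finset.sum_subset (Finset.range_subset_range.2 (by omega)) ?_).symm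
        intro j hj hjn
        rw [Finset.mem_range] at hj hjn
        rw [hfz j (by omega)]
        simp
    _ = ∑ i ∈ Finset.range (n + 1),
          (1 - X ^ 2) ^ (m - n) * (C (f i) * (X ^ (2 * i) * (1 - X ^ 2) ^ (n - i))) := by
        apply Finset.sum_congr rfl
        intro i hi
        rw [Finset.mem_range] at hi
        rw [show m - i = (m - n) + (n - i) from by omega, pow_add]
        ring
end

section
/- Let $n \ge 1$ and suppose the h-vector $(h_0,\ldots,h_n)$ of an $(n-1)$-dimensional simplicial complex satisfies the polynomial identity $(1-t)^{m-n}\sum_i h_i t^i + (\chi-1)(1-t)^m = (1-t)^{m-n}\sum_i h_{n-i} t^i + (-1)^{n-1}(1-t)^m$ for some integers $m > n$ and $\chi$. Then $h_{n-i} - h_i = (-1)^i(\chi - 1 - (-1)^{n-1})\binom{n}{i}$ for all $0 \le i \le n$. -/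
open Finset Polynomial

lemma coeff_one_sub_X_pow (n i : ℕ) : ((1 - X : ℤ[X]) ^ n).coeff i = (-1) ^ i * n.choose i := by
  have : ((1 - X : ℤ[X]) ^ n) = ∑ k ∈ Finset.range (n + 1), C ((-1 : ℤ) ^ k * n.choose k) * X ^ k := by
    rw [sub_eq_add_neg, add_comm, add_pow]
    refine Finset.sum_congr rfl fun k hk => ?_
    push_cast
    ring_nf
    simp [mul_comm, mul_assoc, mul_pow]
    ring
  rw [this, finset_sum_coeff]
  simp only [coeff_C_mul, coeff_X_pow]
  simp only [mul_ite, mul_one, mul_zero]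
  rw [Finset.sum_ite_eq]
  by_cases hi : i ≤ n
  · simp [Nat.lt_succ, hi]
  · push_neg at hi
    rw [Nat.choose_eq_zero_of_lt hi]
    simp [Nat.lt_succ, not_le.mpr hi]

/-- Algebraic core of the generalized Dehn–Sommerville equations: if
`(1-t)^{m-n} ∑ h_i t^i + (χ-1)(1-t)^m = (1-t)^{m-n} ∑ h_{n-i} t^i + (-1)^{n-1} (1-t)^m`
then `h_{n-i} - h_i = (-1)^i (χ - 1 - (-1)^{n-1}) binom(n, i)` for all `0 ≤ i ≤ n`. -/
theorem stmt_6 (m n : ℕ) (hn : 1 ≤ n) (hmn : n < m) (χ : ℤ) (h : ℕ → ℤ)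
    (hyp : (1 - X) ^ (m - n) * (∑ i ∈ Finset.range (n + 1), C (h i) * X ^ i)
            + C (χ - 1) * (1 - X) ^ m
         = (1 - X) ^ (m - n) * (∑ i ∈ Finset.range (n + 1), C (h (n - i)) * X ^ i)
            + C ((-1 : ℤ) ^ (n - 1)) * (1 - X) ^ m) :
    ∀ i, i ≤ n → h (n - i) - h i = (-1 : ℤ) ^ i * (χ - 1 - (-1 : ℤ) ^ (n - 1)) * n.choose i := by
  set c : ℤ := χ - 1 - (-1 : ℤ) ^ (n - 1) with hc
  have hne : ((1 : ℤ[X]) - X) ^ (m - n) ≠ 0 := by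
    apply pow_ne_zero
    intro heq
    have := congrArg (fun p => p.coeff 0) heq
    simp at this
  have hm : (1 - X : ℤ[X]) ^ m = (1 - X) ^ (m - n) * (1 - X) ^ n := by
    rw [← pow_add, Nat.sub_add_cancel hmn.le]
  have key : (∑ i ∈ Finset.range (n + 1), C (h (n - i) - h i) * X ^ i)
      = C c * (1 - X) ^ n := by
    apply mul_left_cancel₀ hne
    have : (1 - X : ℤ[X]) ^ (m - n) *
        (∑ i ∈ Finset.range (n + 1), C (h (n - i)) * X ^ i
          - ∑ i ∈ Finset.range (n + 1), C (h i) * X ^ i)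
        = (C (χ - 1) - C ((-1 : ℤ) ^ (n - 1))) * (1 - X) ^ m := by
      rw [mul_sub]; linear_combination -hyp
    rw [← Finset.sum_sub_distrib] at this
    simp only [← sub_mul, ← C_sub] at this
    rw [this, hm, hc]
    ring
  intro i hi
  have := congrArg (fun p => p.coeff i) key
  simp only [finset_sum_coeff, coeff_C_mul, coeff_X_pow, mul_ite, mul_one, mul_zero,
    Finset.sum_ite_eq, Finset.mem_range, Nat.lt_succ, hi, if_true,
    coeff_one_sub_X_pow] at this
  rw [this]; ring
end

section
/- Let $m \ge n \ge 1$ and let $(h_0,\ldots,h_n)$ be integers with $h_0=1$. Define $\chi_p$ by $\sum_{p=0}^m \chi_p t^p = (1-t)^{m-n}\sum_{i=0}^n h_i t^i$. If $\chi_p = (-1)^{m-n}\chi_{m-p}$ for all $p$, then $h_i = h_{n-i}$ for all $i$. -/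
open Finset Polynomial

lemma coeff_hsum (n : ℕ) (h : ℕ → ℤ) (k : ℕ) :
    (∑ i ∈ Finset.range (n + 1), C (h i) * X ^ i).coeff k
      = if k ≤ n then h k else 0 := by
  rw [finset_sum_coeff]
  simp only [coeff_C_mul, coeff_X_pow, mul_ite, mul_one, mul_zero]
  rw [Finset.sum_ite_eq (Finset.range (n + 1)) k h]
  simp [Nat.lt_succ_iff]

lemma natDegree_hsum (n : ℕ) (h : ℕ → ℤ) :
    (∑ i ∈ Finset.range (n + 1), C (h i) * X ^ i).natDegree ≤ n := by
  apply natDegree_sum_le_of_forall_le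
  intro i hi
  exact (natDegree_C_mul_X_pow_le _ _).trans (Nat.lt_succ_iff.mp (Finset.mem_range.mp hi))

lemma reflect_one_sub_X_pow (k : ℕ) :
    reflect k ((1 - X : ℤ[X]) ^ k) = (X - 1) ^ k := by
  induction k with
  | zero => simp
  | succ k ih =>
      have h1 : ((1 : ℤ[X]) - X).natDegree ≤ 1 := by
        apply natDegree_sub_le _ _ |>.trans
        simp
      have hk : ((1 - X : ℤ[X]) ^ k).natDegree ≤ k := by
        apply (natDegree_pow_le).trans
        exact Nat.mul_le_mul_left k h1 |>.trans (by omega)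
      have : (1 - X : ℤ[X]) ^ (k + 1) = (1 - X) ^ k * (1 - X) := by ring
      rw [this, reflect_mul _ _ hk h1, ih]
      have : reflect 1 ((1 : ℤ[X]) - X) = X - 1 := by
        have : (1 : ℤ[X]) - X = C 1 * X ^ 0 + C (-1) * X ^ 1 := by
          simp; ring
        rw [this, reflect_add, reflect_C_mul_X_pow, reflect_C_mul_X_pow]
        simp only [revAt_le zero_le_one, revAt_le (le_refl 1)]
        simp only [map_one, map_neg, one_mul, neg_mul, Nat.sub_zero, Nat.sub_self, pow_zero, pow_one]
        ring
      rw [this, pow_succ]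

/-- If `∑_p χ_p t^p = (1-t)^{m-n} ∑_i h_i t^i` with `h_0 = 1` and
`χ_p = (-1)^{m-n} χ_{m-p}` for all `p`, then `h_i = h_{n-i}` for all `i`. -/
theorem stmt_12 (m n : ℕ) (hn : 1 ≤ n) (hnm : n ≤ m) (h χ : ℕ → ℤ) (h0 : h 0 = 1)
    (hχ : ∑ p ∈ Finset.range (m + 1), C (χ p) * X ^ p
        = (1 - X) ^ (m - n) * ∑ i ∈ Finset.range (n + 1), C (h i) * X ^ i)
    (hdual : ∀ p, p ≤ m → χ p = (-1 : ℤ) ^ (m - n) * χ (m - p)) :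
    ∀ i, i ≤ n → h i = h (n - i) := by
  set A : ℤ[X] := ∑ i ∈ Finset.range (n + 1), C (h i) * X ^ i with hA
  set P : ℤ[X] := ∑ p ∈ Finset.range (m + 1), C (χ p) * X ^ p with hP
  have hsq : ((-1 : ℤ) ^ (m - n)) * ((-1 : ℤ) ^ (m - n)) = 1 := by
    rw [← pow_add]
    exact (neg_one_pow_eq_one_iff_even (by norm_num)).2 (Even.add_self _)
  -- reflect m P = (-1)^(m-n) • P
  have hrefl : reflect m P = C ((-1 : ℤ) ^ (m - n)) * P := by
    ext k
    rw [coeff_reflect, coeff_C_mul]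
    rcases le_or_gt k m with hk | hk
    · rw [revAt_le hk, hP, coeff_hsum, coeff_hsum, if_pos (by omega), if_pos hk]
      have h1 := hdual k hk
      have h2 := hdual (m - k) (by omega)
      rw [Nat.sub_sub_self hk] at h2
      rw [h2]
    · rw [revAt_eq_self_of_lt hk, hP, coeff_hsum,
        if_neg (by omega), mul_zero]
  have hdegA : A.natDegree ≤ n := natDegree_hsum n h
  have hdeg1 : ((1 - X : ℤ[X]) ^ (m - n)).natDegree ≤ m - n := by
    apply (natDegree_pow_le).trans
    have : ((1 : ℤ[X]) - X).natDegree ≤ 1 := by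
      apply natDegree_sub_le _ _ |>.trans; simp
    exact Nat.mul_le_mul_left (m - n) this |>.trans (by omega)
  have key : reflect n A = A := by
    have e1 : reflect m ((1 - X : ℤ[X]) ^ (m - n) * A)
        = (X - 1) ^ (m - n) * reflect n A := by
      have h3 := reflect_mul ((1 - X : ℤ[X]) ^ (m - n)) A hdeg1 hdegA
      rw [reflect_one_sub_X_pow] at h3
      rwa [Nat.sub_add_cancel hnm] at h3
    have e2 : (X - 1 : ℤ[X]) ^ (m - n) = C ((-1 : ℤ) ^ (m - n)) * (1 - X) ^ (m - n) := by
      rw [← neg_sub (1 : ℤ[X]) X, neg_pow]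
      simp [map_pow]
    have := hrefl
    rw [hχ, e1, e2, mul_assoc] at this
    have hC : (C ((-1 : ℤ) ^ (m - n)) : ℤ[X]) ≠ 0 := by
      simp only [ne_eq, C_eq_zero]
      exact pow_ne_zero _ (by norm_num)
    have h4 := mul_left_cancel₀ hC this
    have h1X : ((1 - X : ℤ[X]) ^ (m - n)) ≠ 0 := by
      apply pow_ne_zero
      intro h10
      have := congrArg (fun q => Polynomial.coeff q 0) h10
      simp at this
    exact mul_left_cancel₀ h1X h4
  intro i hi
  have := congrArg (fun q => Polynomial.coeff q i) key
  rw [coeff_reflect, revAt_le hi, hA, coeff_hsum, coeff_hsum,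
    if_pos hi, if_pos (by omega)] at this
  omega
end

section
/- Let $m > n \ge 1$, let $(f_{-1},f_0,\ldots,f_{n-1})$ with $f_{-1}=1$ determine $(h_0,\ldots,h_n)$, and set $\chi(K)=\sum_{s\ge 0}(-1)^{s-1}f_{s-1}+1$ (so $\chi(K)-1 = -\sum_s (-1)^s f_{s-1}$). Define $\chi_r(\mathcal{W}_K) = \sum_{i+j+l+p \le m,\ l\ge 1,\ i+p=r} (-1)^{j-p} f_{i+j+l-1}\binom{i+j+l}{i}\binom{j+l}{l}\binom{m-i-j-l}{p}$. Then $\sum_{r=0}^m \chi_r(\mathcal{W}_K)\, t^{2r} = (1-t^2)^{m-n}(h_0 + h_1t^2 + \cdots + h_nt^{2n}) + (\chi(K)-1)(1-t^2)^m$. -/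
open Finset Polynomial


lemma reflect_sum' (N : ℕ) (s : Finset ℕ) (g : ℕ → ℤ[X]) :
    reflect N (∑ i ∈ s, g i) = ∑ i ∈ s, reflect N (g i) :=
  map_sum (AddMonoidHom.mk' (reflect N) (fun a b => reflect_add a b N)) g s

lemma xsub_pow (k : ℕ) :
    ((X - 1 : ℤ[X]))^k = ∑ i ∈ range (k+1), C ((-1:ℤ)^(k-i) * (k.choose i)) * X ^ i := by
  have := add_pow (X : ℤ[X]) (-1) k
  simp only [sub_eq_add_neg]
  rw [this]
  refine Finset.sum_congr rfl fun i hi => ?_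
  simp [map_mul, map_pow, C_neg, C_1]
  ring

-- reflect of (X-1)^k
lemma refl_pow (k : ℕ) : reflect k ((X - 1 : ℤ[X])^k) = (1 - X)^k := by
  have h1 := xsub_pow k
  have h2 : ((1 - X : ℤ[X]))^k = ∑ i ∈ range (k+1), C ((-1:ℤ)^(k-i) * (k.choose i)) * X ^ (k - i) := by
    have := add_pow (1 : ℤ[X]) (-X) k
    rw [sub_eq_add_neg, this]
    refine Finset.sum_congr rfl fun i hi => ?_
    rw [neg_pow]
    simp [map_mul, map_pow, C_neg, C_1]
    ring
  rw [h1, reflect_sum', h2]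
  refine Finset.sum_congr rfl fun i hi => ?_
  simp only [mem_range] at hi
  rw [reflect_C_mul_X_pow, revAt_le (Nat.lt_succ_iff.mp hi)]

lemma hFstep (n : ℕ) (f h : ℕ → ℤ)
    (hh : ∑ k ∈ Finset.range (n + 1), C (h k) * X ^ (n - k)
        = ∑ i ∈ Finset.range (n + 1), C (f i) * (X - 1) ^ (n - i)) :
    (∑ k ∈ range (n+1), C (h k) * X^k : ℤ[X])
      = ∑ i ∈ range (n+1), C (f i) * X^i * (1-X)^(n-i) := by
  have H := congrArg (reflect n) hh
  rw [reflect_sum', reflect_sum'] at H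
  have hL : ∀ k ∈ range (n+1), reflect n (C (h k) * X ^ (n - k)) = C (h k) * X ^ k := by
    intro k hk
    rw [reflect_C_mul_X_pow, revAt_le (Nat.sub_le n k),
      Nat.sub_sub_self (Nat.lt_succ_iff.mp (mem_range.mp hk))]
  have hR : ∀ i ∈ range (n+1),
      reflect n (C (f i) * (X - 1) ^ (n - i)) = C (f i) * X^i * (1-X)^(n-i) := by
    intro i hi
    have hin : i ≤ n := Nat.lt_succ_iff.mp (mem_range.mp hi)
    rw [reflect_C_mul]
    have hdeg : ((X - 1 : ℤ[X])^(n-i)).natDegree ≤ n - i := by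
      calc ((X - 1 : ℤ[X])^(n-i)).natDegree ≤ (n-i) * (X - 1 : ℤ[X]).natDegree :=
            natDegree_pow_le
        _ ≤ (n - i) * 1 := by
            gcongr
            simpa using natDegree_X_sub_C_le (1:ℤ)
        _ = n - i := mul_one _
    have hmulr := reflect_mul (1 : ℤ[X]) ((X - 1 : ℤ[X])^(n-i)) (F := i) (G := n - i)
      (by simp) hdeg
    rw [Nat.add_sub_cancel' hin, one_mul, refl_pow] at hmulr
    have hone : reflect i (1 : ℤ[X]) = X ^ i := by
      rw [← C_1, reflect_C, C_1, one_mul]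
    rw [hone] at hmulr
    rw [hmulr, mul_assoc]
  rw [Finset.sum_congr rfl hL, Finset.sum_congr rfl hR] at H
  exact H

lemma Pbin (d m : ℕ) (hdm : d ≤ m) :
    ∑ p ∈ range (m+1), (if p ≤ d then C ((-1:ℤ)^p * (d.choose p)) * X^p else 0)
      = (1 - X : ℤ[X])^d := by
  rw [← Finset.sum_subset (Finset.range_subset_range.mpr (Nat.succ_le_succ hdm))
      (fun x _ hx => by
        rw [if_neg]
        simp only [mem_range, Nat.lt_succ_iff] at hx
        exact hx)]
  have : ((1 - X : ℤ[X]))^d = ((-X) + 1)^d := by ring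
  rw [this, add_pow]
  refine Finset.sum_congr rfl fun p hp => ?_
  rw [if_pos (Nat.lt_succ_iff.mp (mem_range.mp hp))]
  rw [neg_pow]
  simp [map_mul, map_pow, C_neg, C_1]
  ring

lemma Pjl (m d : ℕ) (hdm : d ≤ m) :
    ∑ j ∈ range (m+1), ∑ l ∈ Icc 1 m,
        (if d = j + l then (-1:ℤ)^j * ((j+l).choose l) else 0)
      = if d = 0 then 0 else -(-1:ℤ)^d := by
  have inner : ∀ j ∈ range (m+1),
      (∑ l ∈ Icc 1 m, (if d = j + l then (-1:ℤ)^j * ((j+l).choose l) else 0))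
        = if j < d then (-1:ℤ)^j * (d.choose j) else 0 := by
    intro j _
    by_cases hjd : j < d
    · rw [if_pos hjd]
      rw [Finset.sum_eq_single (d - j)]
      · rw [if_pos (by omega), Nat.add_sub_cancel' hjd.le, Nat.choose_symm hjd.le]
      · intro l _ hl
        rw [if_neg (by omega)]
      · intro hmem
        exact absurd (Finset.mem_Icc.mpr ⟨by omega, by omega⟩) hmem
    · rw [if_neg hjd]
      refine Finset.sum_eq_zero fun l hl => ?_
      have := Finset.mem_Icc.mp hl
      rw [if_neg (by omega)]
  rw [Finset.sum_congr rfl inner]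
  have hrw : ∀ j, (if j < d then (-1:ℤ)^j * (d.choose j) else 0)
      = (if j ∈ range d then (-1:ℤ)^j * (d.choose j) else 0) := by
    intro j; simp [Finset.mem_range]
  simp only [hrw]
  rw [Finset.sum_ite_mem]
  have : range (m+1) ∩ range d = range d :=
    Finset.inter_eq_right.mpr (Finset.range_subset_range.mpr (by omega))
  rw [this]
  rcases Nat.eq_zero_or_pos d with hd | hd
  · subst hd; simp
  · rw [if_neg (by omega)]
    have h2 := Int.alternating_sum_range_choose (n := d)
    rw [Finset.sum_range_succ, if_neg (by omega)] at h2
    simp only [Nat.choose_self, Nat.cast_one, mul_one] at h2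
    linarith

lemma P4 (m s : ℕ) (hsm : s ≤ m) :
    ∑ i ∈ range (m+1), C ((s.choose i : ℤ) * (if i = s then 0 else -(-1:ℤ)^(s-i))) * X^i
      = (X : ℤ[X])^s - (X-1)^s := by
  have hterm : ∀ i, C ((s.choose i : ℤ) * (if i = s then 0 else -(-1:ℤ)^(s-i))) * X^i
      = (if i = s then (X : ℤ[X])^s else 0) - C ((-1:ℤ)^(s-i) * (s.choose i)) * X^i := by
    intro i
    by_cases his : i = s
    · subst his
      simp
    · rw [if_neg his, if_neg his]
      by_cases hle : i ≤ s
      · simp only [map_mul, C_neg]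
        ring
      · have : s.choose i = 0 := Nat.choose_eq_zero_of_lt (by omega)
        simp [this]
  simp only [hterm]
  rw [Finset.sum_sub_distrib]
  congr 1
  · rw [Finset.sum_ite_eq' (range (m+1)) s fun _ => (X:ℤ[X])^s,
      if_pos (mem_range.mpr (by omega))]
  · rw [xsub_pow s]
    symm
    exact Finset.sum_subset (Finset.range_subset_range.mpr (by omega))
      (fun x _ hx => by
        have : s.choose x = 0 := Nat.choose_eq_zero_of_lt (by simp at hx; omega)
        simp [this])

lemma P3 (m s : ℕ) (hsm : s ≤ m) :
    ∑ i ∈ range (m+1), ∑ j ∈ range (m+1), ∑ l ∈ Icc 1 m,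
        (if s = i + j + l then C ((-1:ℤ)^j * (s.choose i) * ((j+l).choose l)) * X^i else 0)
      = (X:ℤ[X])^s - (X-1)^s := by
  rw [← P4 m s hsm]
  refine Finset.sum_congr rfl fun i _ => ?_
  by_cases his : i ≤ s
  · have hfact : ∀ j l, (if s = i + j + l
          then C ((-1:ℤ)^j * (s.choose i) * ((j+l).choose l)) * X^i else 0)
        = C ((s.choose i : ℤ)) * X^i
            * C (if s - i = j + l then ((-1:ℤ)^j * ((j+l).choose l)) else (0:ℤ)) := by
      intro j l
      by_cases hc : s = i + j + l
      · rw [if_pos hc, if_pos (by omega)]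
        simp only [map_mul]; ring
      · rw [if_neg hc, if_neg (by omega), map_zero, mul_zero]
    simp only [hfact, ← Finset.mul_sum, ← map_sum]
    rw [Pjl m (s-i) (by omega)]
    have hcond : (if s - i = 0 then (0:ℤ) else -(-1:ℤ)^(s-i))
        = (if i = s then (0:ℤ) else -(-1:ℤ)^(s-i)) := by
      by_cases h : i = s
      · rw [if_pos h, if_pos (by omega)]
      · rw [if_neg h, if_neg (by omega)]
    rw [hcond, map_mul]
    ring
  · have h0 : s.choose i = 0 := Nat.choose_eq_zero_of_lt (by omega)
    rw [Finset.sum_eq_zero fun j _ => Finset.sum_eq_zero fun l hl => ?_]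
    · simp [h0]
    · have := Finset.mem_Icc.mp hl
      rw [if_neg (by omega)]

lemma mainL (m n : ℕ) (hmn : n ≤ m) (f h : ℕ → ℤ) (hfz : ∀ s, n < s → f s = 0)
    (hF : (∑ k ∈ range (n+1), C (h k) * X^k : ℤ[X])
        = ∑ i ∈ range (n+1), C (f i) * X^i * (1-X)^(n-i)) :
    ∑ r ∈ range (m + 1),
      C (∑ i ∈ range (m + 1), ∑ j ∈ range (m + 1),
         ∑ l ∈ Finset.Icc 1 m, ∑ p ∈ range (m + 1),
           if i + p = r ∧ i + j + l + p ≤ m then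
             (-1 : ℤ) ^ (j + p) * f (i + j + l) * ((i + j + l).choose i) *
               ((j + l).choose l) * ((m - i - j - l).choose p)
           else 0) * X ^ r
    = (1 - X) ^ (m - n) * (∑ i ∈ range (n + 1), C (h i) * X ^ i)
      + C (-(∑ s ∈ range (n + 1), (-1 : ℤ) ^ s * f s)) * (1 - X) ^ m := by
  have swap : ∀ (G : ℕ → ℕ → ℕ → ℕ → ℕ → ℤ[X]),
      (∑ a ∈ range (m+1), ∑ i ∈ range (m+1), ∑ j ∈ range (m+1),
        ∑ l ∈ Icc 1 m, ∑ p ∈ range (m+1), G a i j l p)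
      = ∑ i ∈ range (m+1), ∑ j ∈ range (m+1), ∑ l ∈ Icc 1 m,
          ∑ p ∈ range (m+1), ∑ a ∈ range (m+1), G a i j l p := by
    intro G
    rw [Finset.sum_comm]
    refine Finset.sum_congr rfl fun i _ => ?_
    rw [Finset.sum_comm]
    refine Finset.sum_congr rfl fun j _ => ?_
    rw [Finset.sum_comm]
    refine Finset.sum_congr rfl fun l _ => ?_
    rw [Finset.sum_comm]
  -- Step 1: eliminate r
  have step1 :
      (∑ r ∈ range (m + 1),
        C (∑ i ∈ range (m + 1), ∑ j ∈ range (m + 1),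
           ∑ l ∈ Finset.Icc 1 m, ∑ p ∈ range (m + 1),
             if i + p = r ∧ i + j + l + p ≤ m then
               (-1 : ℤ) ^ (j + p) * f (i + j + l) * ((i + j + l).choose i) *
                 ((j + l).choose l) * ((m - i - j - l).choose p)
             else 0) * X ^ r)
      = ∑ i ∈ range (m+1), ∑ j ∈ range (m+1), ∑ l ∈ Icc 1 m, ∑ p ∈ range (m+1),
          (if i + j + l + p ≤ m then
             C ((-1 : ℤ) ^ (j + p) * f (i + j + l) * ((i + j + l).choose i) *
               ((j + l).choose l) * ((m - i - j - l).choose p)) * X ^ (i + p)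
           else 0) := by
    simp only [map_sum, Finset.sum_mul]
    rw [swap]
    refine Finset.sum_congr rfl fun i _ => Finset.sum_congr rfl fun j _ =>
      Finset.sum_congr rfl fun l hl => Finset.sum_congr rfl fun p _ => ?_
    have hl1 : 1 ≤ l := (Finset.mem_Icc.mp hl).1
    have hterm : ∀ r, (C (if i + p = r ∧ i + j + l + p ≤ m then
               (-1 : ℤ) ^ (j + p) * f (i + j + l) * ((i + j + l).choose i) *
                 ((j + l).choose l) * ((m - i - j - l).choose p)
             else 0)) * X ^ r
        = if r = i + p then
            (if i + j + l + p ≤ m then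
              C ((-1 : ℤ) ^ (j + p) * f (i + j + l) * ((i + j + l).choose i) *
               ((j + l).choose l) * ((m - i - j - l).choose p)) * X ^ r
             else 0)
          else 0 := by
      intro r
      by_cases h1 : r = i + p
      · by_cases h2 : i + j + l + p ≤ m
        · rw [if_pos ⟨h1.symm, h2⟩, if_pos h1, if_pos h2]
        · rw [if_neg (by tauto), if_pos h1, if_neg h2, map_zero, zero_mul]
      · rw [if_neg (by omega), if_neg h1, map_zero, zero_mul]
    simp only [hterm]
    rw [Finset.sum_ite_eq' (range (m+1)) (i+p)]
    by_cases h2 : i + j + l + p ≤ m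
    · rw [if_pos (mem_range.mpr (by omega))]
    · simp [h2]
  rw [step1]
  -- Step 2: insert s
  have step2 :
      (∑ i ∈ range (m+1), ∑ j ∈ range (m+1), ∑ l ∈ Icc 1 m, ∑ p ∈ range (m+1),
          (if i + j + l + p ≤ m then
             C ((-1 : ℤ) ^ (j + p) * f (i + j + l) * ((i + j + l).choose i) *
               ((j + l).choose l) * ((m - i - j - l).choose p)) * X ^ (i + p)
           else 0))
      = ∑ s ∈ range (m+1), ∑ i ∈ range (m+1), ∑ j ∈ range (m+1), ∑ l ∈ Icc 1 m,
          ∑ p ∈ range (m+1),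
          (if s = i + j + l then
            (if i + j + l + p ≤ m then
             C ((-1 : ℤ) ^ (j + p) * f (i + j + l) * ((i + j + l).choose i) *
               ((j + l).choose l) * ((m - i - j - l).choose p)) * X ^ (i + p)
             else 0)
           else 0) := by
    rw [swap]
    refine Finset.sum_congr rfl fun i _ => Finset.sum_congr rfl fun j _ =>
      Finset.sum_congr rfl fun l hl => Finset.sum_congr rfl fun p _ => ?_
    rw [Finset.sum_ite_eq' (range (m+1)) (i+j+l)]
    by_cases h2 : i + j + l + p ≤ m
    · rw [if_pos (mem_range.mpr (by omega))]
    · simp [h2]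
  rw [step2]
  -- Step 3+4: per s
  have step3 : ∀ s ∈ range (m+1),
      (∑ i ∈ range (m+1), ∑ j ∈ range (m+1), ∑ l ∈ Icc 1 m, ∑ p ∈ range (m+1),
          (if s = i + j + l then
            (if i + j + l + p ≤ m then
             C ((-1 : ℤ) ^ (j + p) * f (i + j + l) * ((i + j + l).choose i) *
               ((j + l).choose l) * ((m - i - j - l).choose p)) * X ^ (i + p)
             else 0)
           else 0))
      = C (f s) * ((X:ℤ[X])^s - (X-1)^s) * (1-X)^(m-s) := by
    intro s hs
    have hsm : s ≤ m := Nat.lt_succ_iff.mp (mem_range.mp hs)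
    have inner : ∀ i ∈ range (m+1), ∀ j ∈ range (m+1), ∀ l ∈ Icc 1 m,
        (∑ p ∈ range (m+1),
          (if s = i + j + l then
            (if i + j + l + p ≤ m then
             C ((-1 : ℤ) ^ (j + p) * f (i + j + l) * ((i + j + l).choose i) *
               ((j + l).choose l) * ((m - i - j - l).choose p)) * X ^ (i + p)
             else 0)
           else 0))
        = (C (f s) * (if s = i + j + l
              then C ((-1:ℤ)^j * (s.choose i) * ((j+l).choose l)) * X^i else 0))
            * (1-X)^(m-s) := by
      intro i _ j _ l _
      by_cases hsijl : s = i + j + l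
      · simp only [if_pos hsijl]
        have hW : ∀ p, (if i + j + l + p ≤ m then
             C ((-1 : ℤ) ^ (j + p) * f (i + j + l) * ((i + j + l).choose i) *
               ((j + l).choose l) * ((m - i - j - l).choose p)) * X ^ (i + p)
             else 0)
            = (C (f s) * (C ((-1:ℤ)^j * (s.choose i) * ((j+l).choose l)) * X^i))
              * (if p ≤ m - s then C ((-1:ℤ)^p * ((m-s).choose p)) * X^p else 0) := by
          intro p
          have em : m - i - j - l = m - s := by omega
          by_cases hq : i + j + l + p ≤ m
          · rw [if_pos hq, if_pos (by omega), ← hsijl, em, pow_add, pow_add]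
            simp only [map_mul, map_pow, C_neg, C_1]
            ring
          · rw [if_neg hq, if_neg (by omega), mul_zero]
        rw [Finset.sum_congr rfl fun p _ => hW p, ← Finset.mul_sum,
          Pbin (m-s) m (by omega)]
      · simp only [if_neg hsijl, Finset.sum_const_zero, mul_zero, zero_mul]
    rw [Finset.sum_congr rfl fun i hi => Finset.sum_congr rfl fun j hj =>
      Finset.sum_congr rfl fun l hl => inner i hi j hj l hl]
    simp only [← Finset.sum_mul, ← Finset.mul_sum]
    rw [P3 m s hsm]
  rw [Finset.sum_congr rfl step3]
  -- RHS
  rw [← Finset.sum_subset (Finset.range_subset_range.mpr (Nat.succ_le_succ hmn))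
      (fun s _ hsn => by
        have : n < s := by
          by_contra hc
          exact hsn (mem_range.mpr (by omega))
        rw [hfz s this, map_zero, zero_mul, zero_mul])]
  have key : ∀ s ∈ range (n+1), C (f s) * ((X:ℤ[X])^s - (X-1)^s) * (1-X)^(m-s)
      = (1-X)^(m-n) * (C (f s) * X^s * (1-X)^(n-s)) + C (-((-1:ℤ)^s * f s)) * (1-X)^m := by
    intro s hs
    have hsn : s ≤ n := Nat.lt_succ_iff.mp (mem_range.mp hs)
    have e2 : ((X:ℤ[X])-1)^s * (1-X)^(m-s) = C ((-1:ℤ)^s) * (1-X)^m := by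
      have h3 : ((X:ℤ[X])-1)^s = C ((-1:ℤ)^s) * (1-X)^s := by
        rw [show (X-1:ℤ[X]) = -(1-X) by ring, neg_pow]
        rw [map_pow, C_neg, C_1]
      rw [h3, mul_assoc, ← pow_add]
      congr 2
      omega
    have e1 : (1-X:ℤ[X])^(m-s) = (1-X)^(m-n) * (1-X)^(n-s) := by
      rw [← pow_add]
      congr 1
      omega
    calc C (f s) * ((X:ℤ[X])^s - (X-1)^s) * (1-X)^(m-s)
        = C (f s) * X^s * (1-X)^(m-s) - C (f s) * ((X-1)^s * (1-X)^(m-s)) := by ring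
      _ = C (f s) * X^s * ((1-X)^(m-n) * (1-X)^(n-s))
            - C (f s) * (C ((-1:ℤ)^s) * (1-X)^m) := by rw [e2, e1]
      _ = (1-X)^(m-n) * (C (f s) * X^s * (1-X)^(n-s))
            + C (-((-1:ℤ)^s * f s)) * (1-X)^m := by
          simp only [map_neg, map_mul]
          ring
  rw [Finset.sum_congr rfl key, Finset.sum_add_distrib]
  congr 1
  · rw [← Finset.mul_sum, ← hF]
  · rw [← Finset.sum_mul]
    congr 1
    rw [map_neg, map_sum]
    rw [← Finset.sum_neg_distrib]
    refine Finset.sum_congr rfl fun s _ => ?_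
    rw [map_neg, map_mul]

/-- Theorem 5.4: the generating polynomial of the bigraded Euler characteristics of `W_K` is
`∑_r χ_r(W_K) t^{2r} = (1-t²)^{m-n}(h_0 + ⋯ + h_n t^{2n}) + (χ(K)-1)(1-t²)^m`, where
`χ_r(W_K) = ∑_{i+p=r, l ≥ 1, i+j+l+p ≤ m} (-1)^{j-p} f_{i+j+l-1} binom(i+j+l,i) binom(j+l,l)
binom(m-i-j-l, p)` and `χ(K) - 1 = -∑_s (-1)^s f_{s-1}`. Here `f s` denotes `f_{s-1}`
(so `f 0 = 1`, `f s = 0` for `s > n`), and `(-1)^{j-p} = (-1)^{j+p}`. -/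
theorem stmt_16 (m n : ℕ) (hn : 1 ≤ n) (hmn : n < m) (f h : ℕ → ℤ)
    (hf0 : f 0 = 1) (hfz : ∀ s, n < s → f s = 0)
    (hh : ∑ k ∈ Finset.range (n + 1), C (h k) * X ^ (n - k)
        = ∑ i ∈ Finset.range (n + 1), C (f i) * (X - 1) ^ (n - i)) :
    ∑ r ∈ Finset.range (m + 1),
      C (∑ i ∈ Finset.range (m + 1), ∑ j ∈ Finset.range (m + 1),
         ∑ l ∈ Finset.Icc 1 m, ∑ p ∈ Finset.range (m + 1),
           if i + p = r ∧ i + j + l + p ≤ m then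
             (-1 : ℤ) ^ (j + p) * f (i + j + l) * ((i + j + l).choose i) *
               ((j + l).choose l) * ((m - i - j - l).choose p)
           else 0) * X ^ (2 * r)
    = (1 - X ^ 2) ^ (m - n) * (∑ i ∈ Finset.range (n + 1), C (h i) * X ^ (2 * i))
      + C (-(∑ s ∈ Finset.range (n + 1), (-1 : ℤ) ^ s * f s)) * (1 - X ^ 2) ^ m := by
  have hF := hFstep n f h hh
  have L := mainL m n (le_of_lt hmn) f h hfz hF
  have HH := congrArg (aeval (X^2 : ℤ[X])) L
  simp only [map_sum, map_mul, map_add, map_sub, map_pow, map_one, aeval_X, aeval_C,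
    algebraMap_int_eq, Int.coe_castRingHom] at HH
  simp only [map_sum, C_eq_intCast, pow_mul]
  exact HH
end

section
/- Let $K$ be a simplicial complex on $m$ vertices and let $\mathcal{C}^{-1,4}(K)$ be the span of monomials $v_i u_j$ with $i \ne j$, where $d(v_iu_j) = v_iv_j$ in the Stanley–Reisner ring and $d(u_iu_j) = v_iu_j - v_ju_i$. Then the dimension of the cohomology $H^{-1,4}$ of the Koszul complex equals $\binom{m}{2} - f_1(K)$, where $f_1(K)$ is the number of edges of $K$: the cocycles in bidegree $(-1,4)$ are spanned by $\{v_iu_j : \{i,j\} \notin K\}$, and $v_iu_j$ is cohomologous to $v_ju_i$ for each non-edge $\{i,j\}$. -/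
open Finset

variable (𝕜 : Type*) [Field 𝕜] (m : ℕ) (K : Finset (Finset (Fin m)))

/-- The Koszul differential `d : C^{-1,4} → C^{0,4}`, sending the basis element `v_i u_j`
(`i ≠ j`) to `v_i v_j` in the Stanley--Reisner ring: the coefficient of the (ordered
representative of the) monomial `v_i v_j` in `d(∑ x_{ij} v_i u_j)` is `x_{ij} + x_{ji}` when
`{i,j}` is an edge of `K`, and `v_i v_j = 0` when `{i,j}` is not a face of `K`. -/
noncomputable def dOne :
    (({q : Fin m × Fin m // q.1 ≠ q.2}) → 𝕜) →ₗ[𝕜] (Fin m × Fin m → 𝕜) where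
  toFun x := fun q =>
    if hq : q.1 ≠ q.2 ∧ ({q.1, q.2} : Finset (Fin m)) ∈ K then
      x ⟨q, hq.1⟩ + x ⟨(q.2, q.1), hq.1.symm⟩
    else 0
  map_add' x y := by
    funext q
    by_cases hq : q.1 ≠ q.2 ∧ ({q.1, q.2} : Finset (Fin m)) ∈ K <;>
      simp [hq] <;> ring
  map_smul' c x := by
    funext q
    by_cases hq : q.1 ≠ q.2 ∧ ({q.1, q.2} : Finset (Fin m)) ∈ K <;>
      simp [hq] <;> ring

/-- The Koszul differential `d : C^{-2,4} → C^{-1,4}`, sending the basis element `u_i u_j`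
(`i < j`) to `v_i u_j - v_j u_i`. -/
noncomputable def dZero :
    (({q : Fin m × Fin m // q.1 < q.2}) → 𝕜) →ₗ[𝕜] (({q : Fin m × Fin m // q.1 ≠ q.2}) → 𝕜) where
  toFun y := fun q =>
    if hq : q.1.1 < q.1.2 then y ⟨q.1, hq⟩
    else - y ⟨(q.1.2, q.1.1), lt_of_le_of_ne (not_lt.mp hq) q.2.symm⟩
  map_add' x y := by
    funext q
    by_cases hq : q.1.1 < q.1.2 <;> simp [hq] <;> ring
  map_smul' c x := by
    funext q
    by_cases hq : q.1.1 < q.1.2 <;> simp [hq] <;> ring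

section
variable {𝕜 m K}


lemma ker_dOne_apply {x : ({q : Fin m × Fin m // q.1 ≠ q.2}) → 𝕜}
    (hx : x ∈ LinearMap.ker (dOne 𝕜 m K))
    {i j : Fin m} (hij : i ≠ j) (hK : ({i,j} : Finset (Fin m)) ∈ K) :
    x ⟨(i,j), hij⟩ + x ⟨(j,i), hij.symm⟩ = 0 := by
  have := congrFun (LinearMap.mem_ker.1 hx) (i, j)
  simp only [dOne, LinearMap.coe_mk, AddHom.coe_mk, Pi.zero_apply] at this
  rw [dif_pos ⟨hij, hK⟩] at this
  exact this

lemma dZero_apply (y : ({q : Fin m × Fin m // q.1 < q.2}) → 𝕜)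
    (q : {q : Fin m × Fin m // q.1 ≠ q.2}) :
    dZero 𝕜 m y q = if hq : q.1.1 < q.1.2 then y ⟨q.1, hq⟩
      else - y ⟨(q.1.2, q.1.1), lt_of_le_of_ne (not_lt.mp hq) q.2.symm⟩ := rfl

lemma psi_apply (x : ↥(LinearMap.ker (dOne 𝕜 m K)))
    (q : {q : Fin m × Fin m // q.1 < q.2 ∧ ({q.1, q.2} : Finset (Fin m)) ∉ K}) : True := trivial

/-- the auxiliary map -/
noncomputable def psi :
    ↥(LinearMap.ker (dOne 𝕜 m K)) →ₗ[𝕜]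
      (({q : Fin m × Fin m // q.1 < q.2 ∧ ({q.1, q.2} : Finset (Fin m)) ∉ K}) → 𝕜) where
  toFun x := fun q => x.1 ⟨(q.1.1, q.1.2), q.2.1.ne⟩ + x.1 ⟨(q.1.2, q.1.1), q.2.1.ne'⟩
  map_add' x y := by funext q; simp; ring
  map_smul' c x := by funext q; simp; ring

lemma psi_ker : LinearMap.ker (psi (𝕜 := 𝕜) (m := m) (K := K))
    = (LinearMap.range (dZero 𝕜 m)).comap (LinearMap.ker (dOne 𝕜 m K)).subtype := by
  ext x
  simp only [LinearMap.mem_ker, Submodule.mem_comap, LinearMap.mem_range,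
    Submodule.coe_subtype]
  constructor
  · intro h
    -- antisymmetry
    have anti : ∀ (i j : Fin m) (hij : i ≠ j),
        x.1 ⟨(i,j), hij⟩ + x.1 ⟨(j,i), hij.symm⟩ = 0 := by
      intro i j hij
      by_cases hK : ({i,j} : Finset (Fin m)) ∈ K
      · exact ker_dOne_apply x.2 hij hK
      · rcases hij.lt_or_gt with hlt | hlt
        · exact congrFun h ⟨(i,j), hlt, hK⟩
        · have hK' : ({j,i} : Finset (Fin m)) ∉ K := by
            rwa [Finset.pair_comm]
          have h0 : x.1 ⟨(j,i), hij.symm⟩ + x.1 ⟨(i,j), hij⟩ = 0 :=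
            congrFun h ⟨(j,i), hlt, hK'⟩
          linear_combination h0
    refine ⟨fun p => x.1 ⟨p.1, p.2.ne⟩, ?_⟩
    funext q
    rw [dZero_apply]
    split_ifs with hq
    · beta_reduce
      congr 1
    · beta_reduce
      have h2 : q.1.2 ≠ q.1.1 := q.2.symm
      have h0 : x.1 ⟨(q.1.2, q.1.1), h2⟩ + x.1 ⟨(q.1.1, q.1.2), h2.symm⟩ = 0 :=
        anti q.1.2 q.1.1 h2
      have hx2 : x.1 ⟨(q.1.1, q.1.2), h2.symm⟩ = x.1 q := by congr 1
      rw [hx2] at h0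
      have hx3 : x.1 ⟨(q.1.2, q.1.1),
          (lt_of_le_of_ne (not_lt.mp hq) q.2.symm).ne⟩ = x.1 ⟨(q.1.2, q.1.1), h2⟩ := rfl
      rw [hx3]
      linear_combination -h0
  · rintro ⟨y, hy⟩
    funext q
    have h1 : x.1 ⟨(q.1.1, q.1.2), q.2.1.ne⟩ = dZero 𝕜 m y ⟨(q.1.1, q.1.2), q.2.1.ne⟩ := by
      rw [hy]
    have h2 : x.1 ⟨(q.1.2, q.1.1), q.2.1.ne'⟩ = dZero 𝕜 m y ⟨(q.1.2, q.1.1), q.2.1.ne'⟩ := by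
      rw [hy]
    show x.1 ⟨(q.1.1, q.1.2), q.2.1.ne⟩ + x.1 ⟨(q.1.2, q.1.1), q.2.1.ne'⟩ = 0
    rw [h1, h2, dZero_apply, dZero_apply]
    rw [dif_pos q.2.1, dif_neg (asymm q.2.1)]
    ring

lemma psi_surj : Function.Surjective (psi (𝕜 := 𝕜) (m := m) (K := K)) := by
  classical
  intro t
  set x : ({q : Fin m × Fin m // q.1 ≠ q.2}) → 𝕜 :=
    fun q => if h : q.1.1 < q.1.2 ∧ ({q.1.1, q.1.2} : Finset (Fin m)) ∉ K then t ⟨q.1, h⟩ else 0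
    with hxdef
  have hx : x ∈ LinearMap.ker (dOne 𝕜 m K) := by
    rw [LinearMap.mem_ker]
    funext p
    simp only [dOne, LinearMap.coe_mk, AddHom.coe_mk, Pi.zero_apply]
    split_ifs with hp
    · have e1 : x ⟨p, hp.1⟩ = 0 := by
        simp only [hxdef]
        exact dif_neg (by simp [hp.2])
      have e2 : x ⟨(p.2, p.1), hp.1.symm⟩ = 0 := by
        simp only [hxdef]
        refine dif_neg ?_
        simp only [not_and, not_not]
        intro _
        rw [Finset.pair_comm]
        exact hp.2
      rw [e1, e2, add_zero]
    · rfl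
  refine ⟨⟨x, hx⟩, ?_⟩
  funext q
  show x ⟨(q.1.1, q.1.2), q.2.1.ne⟩ + x ⟨(q.1.2, q.1.1), q.2.1.ne'⟩ = t q
  have e1 : x ⟨(q.1.1, q.1.2), q.2.1.ne⟩ = t q := by
    simp only [hxdef]
    rw [dif_pos (show q.1.1 < q.1.2 ∧ _ from q.2)]
  have e2 : x ⟨(q.1.2, q.1.1), q.2.1.ne'⟩ = 0 := by
    simp only [hxdef]
    exact dif_neg (fun h => asymm q.2.1 h.1)
  rw [e1, e2, add_zero]


end


lemma pair_inj {α : Type*} [LinearOrder α] {a b c d : α} (hab : a < b) (hcd : c < d)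
    (h : ({a, b} : Set α) = {c, d}) : a = c ∧ b = d := by
  have ha : a = c ∨ a = d := by
    have : a ∈ ({c, d} : Set α) := h ▸ by simp
    simpa using this
  have hb : b = c ∨ b = d := by
    have : b ∈ ({c, d} : Set α) := h ▸ by simp
    simpa using this
  rcases ha with ha | ha <;> rcases hb with hb | hb <;>
    first
    | exact ⟨ha, hb⟩
    | (exfalso; subst_vars;
       first
       | exact lt_irrefl _ hab
       | exact lt_irrefl _ (hab.trans hcd)
       | exact lt_irrefl _ (hcd.trans hab))

lemma card_lt_filter (m : ℕ) (P : Finset (Fin m) → Prop) [DecidablePred P] :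
    (univ.filter fun q : Fin m × Fin m => q.1 < q.2 ∧ P {q.1, q.2}).card
    = ((univ.powersetCard 2).filter P).card := by
  apply Finset.card_bij (fun q _ => ({q.1, q.2} : Finset (Fin m)))
  · intro q hq
    simp only [mem_filter, mem_univ, true_and] at hq ⊢
    exact ⟨Finset.mem_powersetCard_univ.2 (Finset.card_pair hq.1.ne), hq.2⟩
  · intro q hq q' hq' h
    simp only [mem_filter, mem_univ, true_and] at hq hq'
    have h' : ({q.1, q.2} : Set (Fin m)) = {q'.1, q'.2} := by
      have := congrArg (fun s : Finset (Fin m) => (s : Set (Fin m))) h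
      simpa using this
    obtain ⟨h1, h2⟩ := pair_inj hq.1 hq'.1 h'
    exact Prod.ext h1 h2
  · intro s hs
    simp only [mem_filter, Finset.mem_powersetCard_univ] at hs
    obtain ⟨a, b, hab, rfl⟩ := Finset.card_eq_two.1 hs.1
    rcases hab.lt_or_gt with h | h
    · exact ⟨(a, b), by simpa [h] using hs.2, rfl⟩
    · refine ⟨(b, a), ?_, by ext x; simp [or_comm]⟩
      have : ({b, a} : Finset (Fin m)) = {a, b} := by ext x; simp [or_comm]
      simp only [mem_filter, mem_univ, true_and]
      exact ⟨h, by convert hs.2 using 2 <;> ext x <;> simp [or_comm]⟩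

/-- Lemma 4.10(d): `dim H^{-1,4} = binom(m,2) - f_1(K)`; the cocycles in bidegree `(-1,4)`
are the `x` with `x_{ij} + x_{ji} = 0` for every edge `{i,j} ∈ K` (i.e. spanned by the
`v_i u_j` with `{i,j} ∉ K` modulo the relations), and `v_i u_j` is cohomologous to `v_j u_i`
via the coboundaries `d(u_i u_j)`. -/
theorem stmt_19 :
    Module.finrank 𝕜
      (↥(LinearMap.ker (dOne 𝕜 m K)) ⧸
        (LinearMap.range (dZero 𝕜 m)).comap (LinearMap.ker (dOne 𝕜 m K)).subtype)
    = m.choose 2 - (K.filter (fun s => s.card = 2)).card := by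
  classical
  rw [← psi_ker, (LinearMap.quotKerEquivOfSurjective _ psi_surj).finrank_eq,
    Module.finrank_fintype_fun_eq_card, Fintype.card_subtype]
  have h1 := card_lt_filter m (fun s => s ∉ K)
  rw [h1]
  have h2 : (univ.powersetCard 2).filter (fun s => s ∈ K) = K.filter (fun s => s.card = 2) := by
    ext s
    simp only [mem_filter, Finset.mem_powersetCard_univ]
    exact and_comm
  have h3 := Finset.card_filter_add_card_filter_not
    (s := univ.powersetCard 2) (p := fun s => s ∈ K)
  have h4 : (univ.powersetCard 2 : Finset (Finset (Fin m))).card = m.choose 2 := by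
    rw [Finset.card_powersetCard, Finset.card_univ, Fintype.card_fin]
  rw [h2] at h3
  omega
end
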